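/- Roe property of the Roe-average matrix for the one-dimensional Euler equations: fix γ > 1 and let (ρ_l, v_l, p_l) and (ρ_r, v_r, p_r) be primitive states with positive densities and pressures, with conserved vectors U_l, U_r, Euler fluxes F(U_l), F(U_r) and specific enthalpies H_l = (E_l + p_l)/ρ_l, H_r = (E_r + p_r)/ρ_r. Define the Roe averages v̂ = (√ρ_l·v_l + √ρ_r·v_r)/(√ρ_l + √ρ_r) and Ĥ = (√ρ_l·H_l + √ρ_r·H_r)/(√ρ_l + √ρ_r), and let A(v̂, Ĥ) be the 3×3 matrix with rows (0, 1, 0), (½(γ−3)v̂², (3−γ)v̂, γ−1), (½(γ−1)v̂³ − v̂Ĥ, Ĥ − (γ−1)v̂², γv̂). Then F(U_r) − F(U_l) = A(v̂, Ĥ)·(U_r − U_l). -/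
import Mathlib


noncomputable section

/-- Conserved vector `U = (ρ, ρv, E)` of a primitive state `(ρ, v, p)`,
with `E = p/(γ-1) + ρ v²/2`. -/
def consU (γ ρ v p : ℝ) : Fin 3 → ℝ := ![ρ, ρ * v, p / (γ - 1) + ρ * v ^ 2 / 2]

/-- Euler flux `F(U) = (ρv, p + ρv², (E+p)v)`. -/
def eulerFlux (γ ρ v p : ℝ) : Fin 3 → ℝ :=
  ![ρ * v, p + ρ * v ^ 2, (p / (γ - 1) + ρ * v ^ 2 / 2 + p) * v]

/-- Jacobian of the one-dimensional Euler flux expressed through the velocity `v`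
and specific enthalpy `H`. -/
def eulerJacobian (γ v H : ℝ) : Matrix (Fin 3) (Fin 3) ℝ :=
  !![0, 1, 0;
     (γ - 3) / 2 * v ^ 2, (3 - γ) * v, γ - 1;
     (γ - 1) / 2 * v ^ 3 - v * H, H - (γ - 1) * v ^ 2, γ * v]

/-- Roe property of the Roe-average matrix for the 1-D Euler equations:
`F(U_r) − F(U_l) = A(v̂, Ĥ)·(U_r − U_l)` where `v̂, Ĥ` are the Roe averages. -/
theorem roe_average_matrix_property
    (γ : ℝ) (hγ : 1 < γ)
    (ρl vl pl ρr vr pr : ℝ)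
    (hρl : 0 < ρl) (hpl : 0 < pl) (hρr : 0 < ρr) (hpr : 0 < pr)
    (Hl Hr vhat Hhat : ℝ)
    (hHl : Hl = (pl / (γ - 1) + ρl * vl ^ 2 / 2 + pl) / ρl)
    (hHr : Hr = (pr / (γ - 1) + ρr * vr ^ 2 / 2 + pr) / ρr)
    (hvhat : vhat = (Real.sqrt ρl * vl + Real.sqrt ρr * vr) / (Real.sqrt ρl + Real.sqrt ρr))
    (hHhat : Hhat = (Real.sqrt ρl * Hl + Real.sqrt ρr * Hr) / (Real.sqrt ρl + Real.sqrt ρr)) :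
    eulerFlux γ ρr vr pr - eulerFlux γ ρl vl pl =
      (eulerJacobian γ vhat Hhat).mulVec (consU γ ρr vr pr - consU γ ρl vl pl) := by
  have ha : (0:ℝ) < Real.sqrt ρl := Real.sqrt_pos.mpr hρl
  have hb : (0:ℝ) < Real.sqrt ρr := Real.sqrt_pos.mpr hρr
  set a := Real.sqrt ρl with hadef
  set b := Real.sqrt ρr with hbdef
  have hρla : ρl = a ^ 2 := by rw [hadef, Real.sq_sqrt hρl.le]
  have hρrb : ρr = b ^ 2 := by rw [hbdef, Real.sq_sqrt hρr.le]
  have hγ1 : γ - 1 ≠ 0 := by linarith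
  have hab : a + b ≠ 0 := by positivity
  subst hHl hHr hvhat hHhat
  rw [hρla, hρrb]
  funext i
  fin_cases i <;>
  · simp [eulerFlux, eulerJacobian, consU, Matrix.mulVec, dotProduct,
      Fin.sum_univ_three]
    try field_simp
    try ring
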